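/- (Induction claim of Appendix B.) Let h, r, s ≥ 1, let r_k, s_k ≥ 1 (1 ≤ k ≤ h) with Σ_k r_k = r, Σ_k s_k = s, and for 1 ≤ l ≤ h define the strategy D_l = A^{r_1}B^{s_1}⋯A^{r_{l−1}}B^{s_{l−1}} A^{r_l+r_{l+1}+⋯+r_h} B^{s_l+s_{l+1}+⋯+s_h}, with block vector a(l) = (r_1, s_1, …, r_{l−1}, s_{l−1}, Σ_{m=l}^h r_m, Σ_{m=l}^h s_m) and associated b_i(l). Then R_{D_l} = 2 Q_l S, where Q_l = l + Σ_{m=1}^{2l} Σ_{j=1}^{2l−1} (−1)^j Π_{i=m}^{m+j−1} b_i(l) + l Π_{i=1}^{2l} b_i(l). -/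

import Mathlib

open Finset

/-- `p°` for a single arm with win probability `x` (Futurity parameter `J = 2`):
`p° = x (1-x)² / (1 - (1-x)²)`. -/
noncomputable def poArm (x : ℝ) : ℝ := x * (1 - x) ^ 2 / (1 - (1 - x) ^ 2)

/-- `p°_D = (1/(r+s)) Σ_{k=1}^{r+s} (Σ_{j=1}^{r+s} p_j Π_{i=j+1}^{j+2k} q_i) / (1 − (q_A^r q_B^s)²)`. -/
noncomputable def pCircD (p : ℕ → ℝ) (r s : ℕ) (qA qB : ℝ) : ℝ :=
  (1 / ((r + s : ℕ) : ℝ)) *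
    ∑ k ∈ Finset.Icc 1 (r + s),
      (∑ j ∈ Finset.Icc 1 (r + s),
          p j * ∏ i ∈ Finset.Icc (j + 1) (j + 2 * k), (1 - p i)) /
        (1 - (qA ^ r * qB ^ s) ^ 2)

/-- The casino's asymptotic profit per coup `R_D = 2(r p°_A + s p°_B)/(r+s) − 2 p°_D`. -/
noncomputable def RD (p : ℕ → ℝ) (r s : ℕ) (pA pB : ℝ) : ℝ :=
  2 * ((r : ℝ) * poArm pA + (s : ℝ) * poArm pB) / ((r + s : ℕ) : ℝ)
    - 2 * pCircD p r s (1 - pA) (1 - pB)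

/-- `S = (q_A − q_B)²(1 + (−1)^{r+s} q_A^r q_B^s) /
      ((r+s)(1+q_A)²(1+q_B)²(1 − (q_A^r q_B^s)²))`. -/
noncomputable def Sval (qA qB : ℝ) (r s : ℕ) : ℝ :=
  (qA - qB) ^ 2 * (1 + (-1 : ℝ) ^ (r + s) * qA ^ r * qB ^ s) /
    (((r + s : ℕ) : ℝ) * (1 + qA) ^ 2 * (1 + qB) ^ 2 * (1 - (qA ^ r * qB ^ s) ^ 2))


lemma sum_window_shift (f : ℕ → ℝ) (n : ℕ) (hf : ∀ i, f (i + n) = f i) (m : ℕ) :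
    ∑ i ∈ range n, f (m + i) = ∑ i ∈ range n, f i := by
  induction m with
  | zero => simp
  | succ m ih =>
    have h1 : ∑ i ∈ range (n+1), f (m + i) = f m + ∑ i ∈ range n, f (m + 1 + i) := by
      rw [Finset.sum_range_succ' (fun i => f (m + i)) n, add_comm]
      congr 1
      exact Finset.sum_congr rfl (fun i _ => by rw [show m + (i+1) = m + 1 + i by omega])
    have h2 : ∑ i ∈ range (n+1), f (m + i) = (∑ i ∈ range n, f (m + i)) + f (m + n) := by
      rw [Finset.sum_range_succ]
    rw [hf m] at h2
    have := h1.symm.trans h2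
    linarith [ih]

lemma periodic_mod (f : ℕ → ℝ) (n : ℕ) (hf : ∀ i, f (i + n) = f i) (m : ℕ) :
    f m = f (m % n) := by
  conv_lhs => rw [← Nat.mod_add_div m n]
  generalize m / n = k
  induction k with
  | zero => simp
  | succ k ih2 => rw [show m % n + n * (k+1) = (m % n + n * k) + n by ring, hf, ih2]

lemma prod_window_shift (f : ℕ → ℝ) (n : ℕ) (hf : ∀ i, f (i + n) = f i) (m : ℕ) :
    ∏ i ∈ range n, f (m + i) = ∏ i ∈ range n, f i := by
  induction m with
  | zero => simp
  | succ m ih =>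
    have h1 : ∏ i ∈ range (n+1), f (m + i) = f m * ∏ i ∈ range n, f (m + 1 + i) := by
      rw [Finset.prod_range_succ' (fun i => f (m + i)) n, mul_comm]
      congr 1
      exact Finset.prod_congr rfl (fun i _ => by rw [show m + (i+1) = m + 1 + i by omega])
    have h2 : ∏ i ∈ range (n+1), f (m + i) = (∏ i ∈ range n, f (m + i)) * f (m + n) := by
      rw [Finset.prod_range_succ]
    rw [hf m] at h2
    have h3 : f m * ∏ i ∈ range n, f (m + 1 + i) = f m * ∏ i ∈ range n, f i := by
      rw [← h1, h2, ih, mul_comm]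
    rcases eq_or_ne (f m) 0 with h | h
    · rcases Nat.eq_zero_or_pos n with hn | hn
      · simp [hn]
      have hz1 : ∏ i ∈ range n, f (m + 1 + i) = 0 := by
        apply Finset.prod_eq_zero (i := n - 1) (by simp [Nat.sub_lt hn])
        rw [show m + 1 + (n - 1) = m + n by omega, hf m, h]
      have hz2 : ∏ i ∈ range n, f i = 0 := by
        apply Finset.prod_eq_zero (i := m % n) (by simp [Nat.mod_lt _ hn])
        rw [← periodic_mod f n hf m, h]
      rw [hz1, hz2]
    · exact mul_left_cancel₀ h h3

lemma sum_range_even_odd (f : ℕ → ℝ) (n : ℕ) :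
    ∑ i ∈ range (2 * n), f i = ∑ i ∈ range n, (f (2 * i) + f (2 * i + 1)) := by
  induction n with
  | zero => simp
  | succ n ih =>
    rw [show 2 * (n + 1) = (2 * n + 1) + 1 by ring, Finset.sum_range_succ, Finset.sum_range_succ,
      ih, Finset.sum_range_succ]
    ring

lemma sum_Icc_one_eq_range (f : ℕ → ℝ) (n : ℕ) :
    ∑ i ∈ Icc 1 n, f i = ∑ i ∈ range n, f (i + 1) := by
  rw [show Icc 1 n = Ico 1 (n+1) by rfl, Finset.sum_Ico_eq_sum_range]
  simp [Nat.add_comm]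

lemma prod_Icc_one_eq_range (f : ℕ → ℝ) (n : ℕ) :
    ∏ i ∈ Icc 1 n, f i = ∏ i ∈ range n, f (i + 1) := by
  rw [show Icc 1 n = Ico 1 (n+1) by rfl, Finset.prod_Ico_eq_prod_range]
  simp [Nat.add_comm]


example (f : ℕ → ℝ) (n : ℕ) : ∑ i ∈ range n, (f i - f (i+1)) = f 0 - f n :=
  Finset.sum_range_sub' f n

lemma alt_pair_sum (C : ℕ → ℝ) (N : ℕ) :
    ∑ k ∈ Icc 1 N, (C (2*k) - C (2*k+1)) = ∑ m ∈ Icc 2 (2*N+1), (-1 : ℝ)^m * C m := by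
  induction N with
  | zero => simp
  | succ N ih =>
    rw [Finset.sum_Icc_succ_top (by omega : 1 ≤ N + 1)]
    rw [show 2*(N+1)+1 = (2*N+1)+1+1 by ring]
    rw [Finset.sum_Icc_succ_top (by omega : 2 ≤ 2*N+1+1+1),
        Finset.sum_Icc_succ_top (by omega : 2 ≤ 2*N+1+1), ih]
    have h1 : (-1 : ℝ)^(2*N+1+1) = 1 := by
      rw [show 2*N+1+1 = 2*(N+1) by ring]; exact (even_two_mul (N+1)).neg_one_pow
    have h2 : (-1 : ℝ)^(2*N+1+1+1) = -1 := by
      rw [show 2*N+1+1+1 = 2*(N+1)+1 by ring]; exact (odd_two_mul_add_one (N+1)).neg_one_pow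
    rw [h1, h2, show 2*N+1+1 = 2*(N+1) by ring]
    ring

lemma sum_blocks (f : ℕ → ℝ) (A : ℕ → ℕ) (hmono : ∀ t, A t ≤ A (t+1)) (T : ℕ) :
    ∑ t ∈ range T, ∑ j ∈ Ioc (A t) (A (t+1)), f j = ∑ j ∈ Ioc (A 0) (A T), f j := by
  induction T with
  | zero => simp
  | succ T ih =>
    rw [Finset.sum_range_succ, ih]
    have h0T : A 0 ≤ A T := by
      clear ih
      induction T with
      | zero => exact le_refl _
      | succ T ih3 => exact le_trans ih3 (hmono T)
    exact Finset.sum_Ioc_consecutive f h0T (hmono T)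

lemma sum_Ioc_rev (f : ℕ → ℝ) (b a : ℕ) (h : a ≤ b) :
    ∑ j ∈ Ioc (b - a) b, f j = ∑ c ∈ range a, f (b - c) := by
  apply Finset.sum_nbij' (i := fun j => b - j) (j := fun c => b - c)
  · intro x hx; simp only [Finset.mem_Ioc] at hx; simp only [Finset.mem_range]; omega
  · intro c hc; simp only [Finset.mem_range] at hc; simp only [Finset.mem_Ioc]; omega
  · intro x hx; simp only [Finset.mem_Ioc] at hx; omega
  · intro c hc; simp only [Finset.mem_range] at hc; omega
  · intro x hx; simp only [Finset.mem_Ioc] at hx; rw [show b - (b - x) = x by omega]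

lemma exists_block (A : ℕ → ℕ) (hmono : ∀ t, A t ≤ A (t+1)) (T i : ℕ)
    (h1 : A 0 < i) (h2 : i ≤ A T) : ∃ t, t < T ∧ A t < i ∧ i ≤ A (t+1) := by
  induction T with
  | zero => omega
  | succ T ih =>
    rcases le_or_gt i (A T) with h | h
    · obtain ⟨t, ht⟩ := ih h; exact ⟨t, by omega, ht.2⟩
    · exact ⟨T, by omega, h, h2⟩


noncomputable def PW (q : ℕ → ℝ) (j M : ℕ) : ℝ := ∏ i ∈ range M, q (j + i)

lemma PW_succ_left (q : ℕ → ℝ) (j M : ℕ) : PW q j (M+1) = q j * PW q (j+1) M := by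
  unfold PW
  rw [Finset.prod_range_succ' (fun i => q (j + i)) M]
  rw [mul_comm]
  congr 1
  exact Finset.prod_congr rfl (fun i _ => by rw [show j + (i+1) = j+1+i by omega])

lemma PW_succ_right (q : ℕ → ℝ) (j M : ℕ) : PW q j (M+1) = PW q j M * q (j+M) := by
  unfold PW; rw [Finset.prod_range_succ]

lemma PW_add (q : ℕ → ℝ) (j M N : ℕ) : PW q j (M+N) = PW q j M * PW q (j+M) N := by
  unfold PW
  rw [Finset.prod_range_add]
  congr 1
  exact Finset.prod_congr rfl (fun i _ => by rw [show j + (M+i) = j+M+i by omega])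

lemma PW_per (q : ℕ → ℝ) (n : ℕ) (hq : ∀ i, q (i+n) = q i) (j M : ℕ) :
    PW q (j+n) M = PW q j M := by
  unfold PW
  exact Finset.prod_congr rfl (fun i _ => by rw [show j+n+i = (j+i)+n by omega, hq])

lemma PW_window (q : ℕ → ℝ) (n : ℕ) (hq : ∀ i, q (i+n) = q i) (j : ℕ) :
    PW q j n = PW q 1 n := by
  unfold PW
  rw [prod_window_shift q n hq j, ← prod_window_shift q n hq 1]

noncomputable def Mp (bl : ℕ → ℝ) (m j : ℕ) : ℝ := ∏ i ∈ range j, bl (m + i)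

lemma Mp_succ_left (bl : ℕ → ℝ) (m j : ℕ) : Mp bl m (j+1) = bl m * Mp bl (m+1) j :=
  PW_succ_left bl m j

lemma Mp_succ_right (bl : ℕ → ℝ) (m j : ℕ) : Mp bl m (j+1) = Mp bl m j * bl (m+j) :=
  PW_succ_right bl m j

lemma Mp_per (bl : ℕ → ℝ) (L : ℕ) (hbl : ∀ i, bl (i+L) = bl i) (m j : ℕ) :
    Mp bl (m+L) j = Mp bl m j := PW_per bl L hbl m j

lemma Mp_window (bl : ℕ → ℝ) (L : ℕ) (hbl : ∀ i, bl (i+L) = bl i) (m : ℕ) :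
    Mp bl m L = ∏ i ∈ range L, bl i := prod_window_shift bl L hbl m

noncomputable def Wd (q : ℕ → ℝ) (c w : ℝ) (n : ℕ) : ℕ → ℝ
  | 0 => w
  | d+1 => q (n - d) * (c - Wd q c w n d)

noncomputable def kap (g bl : ℕ → ℝ) (L t : ℕ) : ℝ :=
  ∑ u ∈ range L, g (t+u) * (1 - bl (t+u)) * Mp bl t u

noncomputable def Efun (bl : ℕ → ℝ) (l t : ℕ) : ℝ :=
  ∑ u ∈ range l, (1 - bl (t+1+2*u)) * Mp bl (t+1) (2*u)

lemma kap_per (g bl : ℕ → ℝ) (L : ℕ) (hbl : ∀ i, bl (i+L) = bl i)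
    (hg : ∀ i, g (i+L) = g i) (t : ℕ) : kap g bl L (t+L) = kap g bl L t := by
  unfold kap
  refine Finset.sum_congr rfl (fun u _ => ?_)
  rw [show t+L+u = (t+u)+L by omega, hbl, hg, Mp_per bl L hbl]


lemma telescope_one_sub (bl : ℕ → ℝ) (L t : ℕ) :
    ∑ u ∈ range L, (1 - bl (t+u)) * Mp bl t u = 1 - Mp bl t L := by
  have : ∀ u ∈ range L, (1 - bl (t+u)) * Mp bl t u = Mp bl t u - Mp bl t (u+1) := by
    intro u _
    rw [Mp_succ_right]
    ring
  rw [Finset.sum_congr rfl this, Finset.sum_range_sub' (fun u => Mp bl t u) L]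
  simp [Mp]

lemma kap_rec (g bl : ℕ → ℝ) (L : ℕ) (hL : 1 ≤ L) (hbl : ∀ i, bl (i+L) = bl i)
    (hg : ∀ i, g (i+L) = g i) (t : ℕ) :
    kap g bl L t
      = g t * (1 - bl t) * (1 - ∏ i ∈ range L, bl i) + bl t * kap g bl L (t+1) := by
  obtain ⟨L', rfl⟩ : ∃ L', L = L' + 1 := ⟨L - 1, by omega⟩
  unfold kap
  rw [Finset.sum_range_succ' (fun u => g (t+u) * (1 - bl (t+u)) * Mp bl t u) L']
  rw [Finset.sum_range_succ (fun u => g (t+1+u) * (1 - bl (t+1+u)) * Mp bl (t+1) u) L']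
  have h1 : ∀ u, g (t+(u+1)) * (1 - bl (t+(u+1))) * Mp bl t (u+1)
      = bl t * (g (t+1+u) * (1 - bl (t+1+u)) * Mp bl (t+1) u) := by
    intro u
    rw [Mp_succ_left, show t+(u+1) = t+1+u by omega]
    ring
  rw [Finset.sum_congr rfl (fun u _ => h1 u)]
  rw [← Finset.mul_sum]
  have h2 : g (t+1+L') = g t := by rw [show t+1+L' = t+(L'+1) by omega, hg]
  have h3 : bl (t+1+L') = bl t := by rw [show t+1+L' = t+(L'+1) by omega, hbl]
  have h4 : bl t * Mp bl (t+1) L' = ∏ i ∈ range (L'+1), bl i := by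
    rw [← Mp_succ_left, Mp_window bl (L'+1) hbl]
  simp only [h2, h3]
  have expand : bl t * (∑ u ∈ range L', g (t + 1 + u) * (1 - bl (t + 1 + u)) * Mp bl (t + 1) u
        + g t * (1 - bl t) * Mp bl (t+1) L')
      = bl t * (∑ u ∈ range L', g (t + 1 + u) * (1 - bl (t + 1 + u)) * Mp bl (t + 1) u)
        + (bl t * Mp bl (t+1) L') * (g t * (1 - bl t)) := by ring
  rw [expand, h4]
  simp only [Mp, Finset.prod_range_zero, Nat.add_zero]
  ring

lemma g_per_two (g : ℕ → ℝ) (hg : ∀ i, g (i+2) = g i) : ∀ i k, g (i + 2*k) = g i := by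
  intro i k
  induction k with
  | zero => simp
  | succ k ih => rw [show i + 2*(k+1) = (i + 2*k) + 2 by ring, hg, ih]

lemma kap_sub (g bl : ℕ → ℝ) (l : ℕ) (hbl : ∀ i, bl (i+2*l) = bl i)
    (hg : ∀ i, g (i+2) = g i) (t : ℕ) :
    kap g bl (2*l) (t+1) - g t * (1 - ∏ i ∈ range (2*l), bl i)
      = (g (t+1) - g t) * Efun bl l t := by
  have htel := telescope_one_sub bl (2*l) (t+1)
  rw [Mp_window bl (2*l) hbl] at htel
  rw [← htel, Finset.mul_sum]
  unfold kap
  rw [← Finset.sum_sub_distrib]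
  have : ∀ u ∈ range (2*l),
      g (t+1+u) * (1 - bl (t+1+u)) * Mp bl (t+1) u - g t * ((1 - bl (t+1+u)) * Mp bl (t+1) u)
      = (g (t+1+u) - g t) * ((1 - bl (t+1+u)) * Mp bl (t+1) u) := by
    intro u _; ring
  rw [Finset.sum_congr rfl this]
  rw [sum_range_even_odd (fun u => (g (t+1+u) - g t) * ((1 - bl (t+1+u)) * Mp bl (t+1) u)) l]
  unfold Efun
  rw [Finset.mul_sum]
  refine Finset.sum_congr rfl (fun u _ => ?_)
  have hodd : g (t+1+(2*u+1)) = g t := by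
    rw [show t+1+(2*u+1) = t + 2*(u+1) by ring, g_per_two g hg]
  have heven : g (t+1+2*u) = g (t+1) := by
    rw [show t+1+2*u = (t+1) + 2*u by ring, g_per_two g hg]
  rw [hodd, heven]
  ring


lemma sum_Ioc_shift (f : ℕ → ℝ) (a b k : ℕ) :
    ∑ m ∈ Ioc (a+k) (b+k), f m = ∑ m ∈ Ioc a b, f (m+k) := by
  apply Finset.sum_nbij' (i := fun m => m - k) (j := fun m => m + k)
  · intro x hx; simp only [Finset.mem_Ioc] at hx ⊢; omega
  · intro x hx; simp only [Finset.mem_Ioc] at hx ⊢; omega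
  · intro x hx; simp only [Finset.mem_Ioc] at hx; omega
  · intro x hx; simp only [Finset.mem_Ioc] at hx; omega
  · intro x hx; simp only [Finset.mem_Ioc] at hx; rw [show x - k + k = x by omega]

lemma X_eq (bl : ℕ → ℝ) (l : ℕ) (hbl : ∀ i, bl (i+2*l) = bl i) (o : ℕ) :
    ∑ k ∈ range l, (1 - bl (2*k+o)) * Efun bl l (2*k+o)
      = l + (∑ m ∈ Icc 1 (2*l), ∑ u ∈ range l, (Mp bl m (2*u+2) - Mp bl m (2*u+1)))
          - l * ∏ i ∈ range (2*l), bl i := by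
  set BL := ∏ i ∈ range (2*l), bl i with hBL
  set h : ℕ → ℝ := fun m => ∑ u ∈ range l, (Mp bl m (2*u+2) - Mp bl m (2*u+1)) with hh
  have expand : ∀ t, (1 - bl t) * Efun bl l t
      = (h (t+1) + (1 - BL)) + h t := by
    intro t
    unfold Efun
    rw [Finset.mul_sum]
    have e : ∀ u ∈ range l, (1 - bl t) * ((1 - bl (t+1+2*u)) * Mp bl (t+1) (2*u))
        = ((Mp bl (t+1) (2*u) - Mp bl (t+1) (2*u+2)) + (Mp bl (t+1) (2*u+2)
            - Mp bl (t+1) (2*u+1)))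
          + (Mp bl t (2*u+2) - Mp bl t (2*u+1)) := by
      intro u _
      have e1 : Mp bl t (2*u+1) = bl t * Mp bl (t+1) (2*u) := Mp_succ_left bl t (2*u)
      have e2 : Mp bl (t+1) (2*u+1) = Mp bl (t+1) (2*u) * bl (t+1+2*u) :=
        Mp_succ_right bl (t+1) (2*u)
      have e3 : Mp bl t (2*u+2) = bl t * Mp bl (t+1) (2*u+1) := Mp_succ_left bl t (2*u+1)
      rw [e3, e2, e1]
      ring
    rw [Finset.sum_congr rfl e]
    rw [Finset.sum_add_distrib, Finset.sum_add_distrib]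
    have tel : ∑ u ∈ range l, (Mp bl (t+1) (2*u) - Mp bl (t+1) (2*u+2)) = 1 - BL := by
      have := Finset.sum_range_sub' (fun u => Mp bl (t+1) (2*u)) l
      simp only [show ∀ u : ℕ, 2*(u+1) = 2*u+2 from fun u => by ring] at this
      rw [this, Mp_window bl (2*l) hbl (t+1)]
      simp [Mp, hBL]
    rw [tel]
    simp only [hh]
    beta_reduce
    ring
  rw [Finset.sum_congr rfl (fun k _ => expand (2*k+o))]
  rw [Finset.sum_add_distrib, Finset.sum_add_distrib]
  have hper : ∀ m, h (m + 2*l) = h m := by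
    intro m
    simp only [hh]
    exact Finset.sum_congr rfl (fun u _ => by rw [Mp_per bl (2*l) hbl, Mp_per bl (2*l) hbl])
  have merge : (∑ k ∈ range l, h (2*k+o+1)) + ∑ k ∈ range l, h (2*k+o)
      = ∑ m ∈ Icc 1 (2*l), h m := by
    have h1 : ∑ i ∈ range (2*l), h (o+i) = ∑ k ∈ range l, (h (o + 2*k) + h (o + (2*k+1))) :=
      sum_range_even_odd (fun i => h (o+i)) l
    have h2 : ∑ i ∈ range (2*l), h (o+i) = ∑ i ∈ range (2*l), h i :=
      sum_window_shift h (2*l) hper o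
    have h3 : ∑ m ∈ Icc 1 (2*l), h m = ∑ i ∈ range (2*l), h (1+i) := by
      rw [sum_Icc_one_eq_range h (2*l)]
      exact Finset.sum_congr rfl (fun i _ => by rw [Nat.add_comm])
    have h4 : ∑ i ∈ range (2*l), h (1+i) = ∑ i ∈ range (2*l), h i :=
      sum_window_shift h (2*l) hper 1
    rw [h3, h4, ← h2, h1]
    rw [← Finset.sum_add_distrib]
    exact Finset.sum_congr rfl (fun k _ => by
      rw [show o + 2*k = 2*k+o by omega, show o + (2*k+1) = 2*k+o+1 by omega, add_comm])
  have const : ∑ _k ∈ range l, (1 - BL) = l * (1 - BL) := by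
    rw [Finset.sum_const, Finset.card_range, nsmul_eq_mul]
  rw [const]
  linarith [merge]


lemma prod_Icc_window (bl : ℕ → ℝ) (m j : ℕ) (hj : 1 ≤ j) :
    ∏ i ∈ Icc m (m+j-1), bl i = Mp bl m j := by
  have : Icc m (m+j-1) = Ico m (m+j) := by
    ext x; simp only [Finset.mem_Icc, Finset.mem_Ico]; omega
  rw [this, Finset.prod_Ico_eq_prod_range]
  simp only [Nat.add_sub_cancel_left]
  rfl

lemma DS_inner (bl : ℕ → ℝ) (l m : ℕ) (hl : 1 ≤ l) :
    ∑ j ∈ Icc 1 (2*l-1), (-1:ℝ)^j * ∏ i ∈ Icc m (m+j-1), bl i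
      = (∑ u ∈ range l, (Mp bl m (2*u+2) - Mp bl m (2*u+1))) - Mp bl m (2*l) := by
  have step1 : ∑ j ∈ Icc 1 (2*l-1), (-1:ℝ)^j * ∏ i ∈ Icc m (m+j-1), bl i
      = ∑ i ∈ range (2*l-1), (-1:ℝ)^(i+1) * Mp bl m (i+1) := by
    rw [sum_Icc_one_eq_range (fun j => (-1:ℝ)^j * ∏ i ∈ Icc m (m+j-1), bl i) (2*l-1)]
    exact Finset.sum_congr rfl (fun i _ => by rw [prod_Icc_window bl m (i+1) (by omega)])
  rw [step1]
  have step2 : ∑ i ∈ range (2*l), (-1:ℝ)^(i+1) * Mp bl m (i+1)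
      = (∑ i ∈ range (2*l-1), (-1:ℝ)^(i+1) * Mp bl m (i+1)) + Mp bl m (2*l) := by
    rw [show 2*l = (2*l-1)+1 by omega, Finset.sum_range_succ]
    congr 1
    rw [show (2*l-1)+1 = 2*l by omega]
    have : (-1:ℝ)^(2*l) = 1 := (even_two_mul l).neg_one_pow
    rw [this, one_mul]
  have step3 : ∑ i ∈ range (2*l), (-1:ℝ)^(i+1) * Mp bl m (i+1)
      = ∑ u ∈ range l, (Mp bl m (2*u+2) - Mp bl m (2*u+1)) := by
    rw [sum_range_even_odd (fun i => (-1:ℝ)^(i+1) * Mp bl m (i+1)) l]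
    refine Finset.sum_congr rfl (fun u _ => ?_)
    have h1 : (-1:ℝ)^(2*u+1) = -1 := (odd_two_mul_add_one u).neg_one_pow
    have h2 : (-1:ℝ)^(2*u+1+1) = 1 := by
      rw [show 2*u+1+1 = 2*(u+1) by ring]; exact (even_two_mul (u+1)).neg_one_pow
    rw [h1, h2, show 2*u+1+1 = 2*u+2 by ring]
    ring
  linarith [step2, step3]


lemma sum_Icc_one_eq_range_nat (f : ℕ → ℕ) (n : ℕ) :
    ∑ i ∈ Icc 1 n, f i = ∑ i ∈ range n, f (i + 1) := by
  rw [show Icc 1 n = Ico 1 (n+1) by rfl, Finset.sum_Ico_eq_sum_range]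
  simp [Nat.add_comm]

lemma sum_range_even_odd_nat (f : ℕ → ℕ) (n : ℕ) :
    ∑ i ∈ range (2 * n), f i = ∑ i ∈ range n, (f (2 * i) + f (2 * i + 1)) := by
  induction n with
  | zero => simp
  | succ n ih =>
    rw [show 2 * (n + 1) = (2 * n + 1) + 1 by ring, Finset.sum_range_succ, Finset.sum_range_succ,
      ih, Finset.sum_range_succ]
    ring

lemma prod_range_even_odd (f : ℕ → ℝ) (n : ℕ) :
    ∏ i ∈ range (2 * n), f i = ∏ i ∈ range n, (f (2 * i) * f (2 * i + 1)) := by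
  induction n with
  | zero => simp
  | succ n ih =>
    rw [show 2 * (n + 1) = (2 * n + 1) + 1 by ring, Finset.prod_range_succ,
      Finset.prod_range_succ, ih, Finset.prod_range_succ]
    ring

lemma prod_blocks (f : ℕ → ℝ) (A : ℕ → ℕ) (hmono : ∀ t, A t ≤ A (t+1)) (T : ℕ) :
    ∏ t ∈ range T, ∏ j ∈ Ioc (A t) (A (t+1)), f j = ∏ j ∈ Ioc (A 0) (A T), f j := by
  induction T with
  | zero => simp
  | succ T ih =>
    rw [Finset.prod_range_succ, ih]
    have h0T : A 0 ≤ A T := by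
      clear ih
      induction T with
      | zero => exact le_refl _
      | succ T ih3 => exact le_trans ih3 (hmono T)
    exact Finset.prod_Ioc_consecutive f h0T (hmono T)

set_option maxHeartbeats 2000000

/-- Induction claim of Appendix B: for `1 ≤ l ≤ h` and the strategy
`D_l = A^{r_1}B^{s_1}⋯A^{r_{l−1}}B^{s_{l−1}} A^{r_l+⋯+r_h} B^{s_l+⋯+s_h}`
with block vector `a(l) = (r_1, s_1, …, r_{l−1}, s_{l−1}, Σ_{m=l}^h r_m, Σ_{m=l}^h s_m)`
and associated `b_i(l)` (period `2l`), one has `R_{D_l} = 2 Q_l S` with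
`Q_l = l + Σ_{m=1}^{2l} Σ_{j=1}^{2l−1} (−1)^j Π_{i=m}^{m+j−1} b_i(l) + l Π_{i=1}^{2l} b_i(l)`. -/
theorem appendixB_induction_claim
    (pA pB qA qB : ℝ) (hpA : pA ∈ Set.Ioo (0 : ℝ) 1) (hpB : pB ∈ Set.Ioo (0 : ℝ) 1)
    (hqA : qA = 1 - pA) (hqB : qB = 1 - pB)
    (h r s : ℕ) (hh : 1 ≤ h) (hr : 1 ≤ r) (hs : 1 ≤ s)
    (rk sk : ℕ → ℕ)
    (hrk : ∀ k, 1 ≤ k → k ≤ h → 1 ≤ rk k) (hsk : ∀ k, 1 ≤ k → k ≤ h → 1 ≤ sk k)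
    (hrsum : ∑ k ∈ Finset.Icc 1 h, rk k = r) (hssum : ∑ k ∈ Finset.Icc 1 h, sk k = s)
    (l : ℕ) (hl1 : 1 ≤ l) (hl2 : l ≤ h)
    -- block vector a(l) of the strategy D_l
    (al : ℕ → ℕ)
    (hal : ∀ j, 1 ≤ j → j ≤ l - 1 → al (2 * j - 1) = rk j ∧ al (2 * j) = sk j)
    (halr : al (2 * l - 1) = ∑ m ∈ Finset.Icc l h, rk m)
    (hals : al (2 * l) = ∑ m ∈ Finset.Icc l h, sk m)
    -- the strategy D_l
    (p : ℕ → ℝ)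
    (hper : ∀ i, p (i + (r + s)) = p i)
    (hblocks : ∀ t, 1 ≤ t → t ≤ 2 * l → ∀ i,
        (∑ k ∈ Finset.Icc 1 (t - 1), al k) < i → i ≤ ∑ k ∈ Finset.Icc 1 t, al k →
        p i = if t % 2 = 1 then pA else pB)
    -- the numbers b_i(l)
    (bl : ℕ → ℝ)
    (hblper : ∀ i, bl (i + 2 * l) = bl i)
    (hbl : ∀ j, 1 ≤ j → j ≤ l →
        bl (2 * j - 1) = (-1 : ℝ) ^ al (2 * j - 1) * qA ^ al (2 * j - 1) ∧
        bl (2 * j) = (-1 : ℝ) ^ al (2 * j) * qB ^ al (2 * j)) :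
    RD p r s pA pB
      = 2 * ((l : ℝ)
            + (∑ m ∈ Finset.Icc 1 (2 * l), ∑ j ∈ Finset.Icc 1 (2 * l - 1),
                (-1 : ℝ) ^ j * ∏ i ∈ Finset.Icc m (m + j - 1), bl i)
            + (l : ℝ) * ∏ i ∈ Finset.Icc 1 (2 * l), bl i)
          * Sval qA qB r s := by
  obtain ⟨hpA0, hpA1⟩ := hpA
  obtain ⟨hpB0, hpB1⟩ := hpB
  have hqA0 : 0 < qA := by rw [hqA]; linarith
  have hqA1 : qA < 1 := by rw [hqA]; linarith
  have hqB0 : 0 < qB := by rw [hqB]; linarith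
  have hqB1 : qB < 1 := by rw [hqB]; linarith
  set n := r + s with hn
  have hn2 : 2 ≤ n := by omega
  set q : ℕ → ℝ := fun i => 1 - p i with hq
  have hq_per : ∀ i, q (i + n) = q i := fun i => by simp only [hq]; rw [hper i]
  set A : ℕ → ℕ := fun t => ∑ k ∈ Finset.Icc 1 t, al k with hA
  have hA0 : A 0 = 0 := by simp [hA]
  have hAsucc : ∀ t, A (t+1) = A t + al (t+1) := fun t => by
    simp only [hA]; rw [Finset.sum_Icc_succ_top (by omega)]
  have hAmono : ∀ t, A t ≤ A (t+1) := fun t => by rw [hAsucc]; omega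
  set qb : ℕ → ℝ := fun t => if t % 2 = 1 then qA else qB with hqbdef
  set g : ℕ → ℝ := fun t => qb t / (1 + qb t) with hgdef
  have hqb0 : ∀ t, 0 < qb t := fun t => by
    simp only [hqbdef]; split <;> assumption
  have hqb1 : ∀ t, qb t < 1 := fun t => by
    simp only [hqbdef]; split <;> assumption
  have hqbp1 : ∀ t, 1 + qb t ≠ 0 := fun t => by have := hqb0 t; positivity
  have hg2 : ∀ t, g (t+2) = g t := fun t => by
    simp only [hgdef, hqbdef, Nat.add_mod_right]
  have hgL : ∀ i, g (i + 2*l) = g i := fun i => g_per_two g hg2 i l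
  have hqblock : ∀ t, 1 ≤ t → t ≤ 2*l → ∀ i, A (t-1) < i → i ≤ A t → q i = qb t := by
    intro t h1 h2 i hi1 hi2
    have hp := hblocks t h1 h2 i hi1 hi2
    simp only [hq, hqbdef]
    rw [hp]
    split
    · exact hqA.symm
    · exact hqB.symm
  -- parity block sums
  have hsum_odd : ∑ k ∈ Finset.range l, al (2*k+1) = r := by
    have hsplit : ∑ k ∈ Finset.range l, al (2*k+1)
        = ∑ k ∈ Finset.range (l-1), al (2*k+1) + al (2*(l-1)+1) := by
      conv_lhs => rw [show l = l-1+1 by omega]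
      rw [Finset.sum_range_succ]
    have hlast : al (2*(l-1)+1) = ∑ m ∈ Finset.Icc l h, rk m := by
      rw [show 2*(l-1)+1 = 2*l-1 by omega]; exact halr
    have hrest : ∀ k ∈ Finset.range (l-1), al (2*k+1) = rk (k+1) := by
      intro k hk
      simp only [Finset.mem_range] at hk
      have := (hal (k+1) (by omega) (by omega)).1
      rwa [show 2*(k+1)-1 = 2*k+1 by omega] at this
    rw [hsplit, Finset.sum_congr rfl hrest, hlast]
    have e1 : ∑ k ∈ Finset.range (l-1), rk (k+1) = ∑ j ∈ Finset.Icc 1 (l-1), rk j :=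
      (sum_Icc_one_eq_range_nat rk (l-1)).symm
    rw [e1]
    have e2 : Finset.Icc 1 (l-1) = Finset.Ioc 0 (l-1) := rfl
    have e3 : Finset.Icc l h = Finset.Ioc (l-1) h := by
      ext x; simp only [Finset.mem_Icc, Finset.mem_Ioc]; omega
    rw [e2, e3, Finset.sum_Ioc_consecutive rk (by omega) (by omega)]
    exact hrsum
  have hsum_even : ∑ k ∈ Finset.range l, al (2*k+2) = s := by
    have hsplit : ∑ k ∈ Finset.range l, al (2*k+2)
        = ∑ k ∈ Finset.range (l-1), al (2*k+2) + al (2*(l-1)+2) := by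
      conv_lhs => rw [show l = l-1+1 by omega]
      rw [Finset.sum_range_succ]
    have hlast : al (2*(l-1)+2) = ∑ m ∈ Finset.Icc l h, sk m := by
      rw [show 2*(l-1)+2 = 2*l by omega]; exact hals
    have hrest : ∀ k ∈ Finset.range (l-1), al (2*k+2) = sk (k+1) := by
      intro k hk
      simp only [Finset.mem_range] at hk
      have := (hal (k+1) (by omega) (by omega)).2
      rwa [show 2*(k+1) = 2*k+2 by omega] at this
    rw [hsplit, Finset.sum_congr rfl hrest, hlast]
    have e1 : ∑ k ∈ Finset.range (l-1), sk (k+1) = ∑ j ∈ Finset.Icc 1 (l-1), sk j :=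
      (sum_Icc_one_eq_range_nat sk (l-1)).symm
    rw [e1]
    have e3 : Finset.Icc l h = Finset.Ioc (l-1) h := by
      ext x; simp only [Finset.mem_Icc, Finset.mem_Ioc]; omega
    rw [show Finset.Icc 1 (l-1) = Finset.Ioc 0 (l-1) from rfl, e3,
      Finset.sum_Ioc_consecutive sk (by omega) (by omega)]
    exact hssum
  have hAL : A (2*l) = n := by
    simp only [hA]
    rw [sum_Icc_one_eq_range_nat al (2*l), sum_range_even_odd_nat (fun i => al (i+1)) l]
    have : ∀ k ∈ Finset.range l, al (2*k+1) + al (2*k+1+1) = al (2*k+1) + al (2*k+2) := by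
      intro k _; rw [show 2*k+1+1 = 2*k+2 by omega]
    rw [Finset.sum_congr rfl this, Finset.sum_add_distrib, hsum_odd, hsum_even]
  
  set Qv : ℝ := qA^r * qB^s with hQvdef
  have hQv0 : 0 < Qv := by positivity
  have hQv1 : Qv < 1 := by
    have h1 : qA^r < 1 := pow_lt_one₀ (le_of_lt hqA0) hqA1 (by omega)
    have h2 : qB^s < 1 := pow_lt_one₀ (le_of_lt hqB0) hqB1 (by omega)
    have h3 : 0 < qA^r := pow_pos hqA0 r
    have h4 : 0 < qB^s := pow_pos hqB0 s
    nlinarith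
  have hqprod_inner : ∀ t ∈ Finset.range (2*l),
      ∏ j ∈ Finset.Ioc (A t) (A (t+1)), q j = qb (t+1) ^ (al (t+1)) := by
    intro t ht
    simp only [Finset.mem_range] at ht
    have hc : ∀ j ∈ Finset.Ioc (A t) (A (t+1)), q j = qb (t+1) := by
      intro j hj
      simp only [Finset.mem_Ioc] at hj
      have e : A ((t+1)-1) = A t := by norm_num
      exact hqblock (t+1) (by omega) (by omega) j (e ▸ hj.1) hj.2
    rw [Finset.prod_congr rfl hc, Finset.prod_const, Nat.card_Ioc, hAsucc t]
    congr 1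
    omega
  have hqb_odd : ∀ k : ℕ, qb (2*k+1) = qA := fun k => by
    have e : (2*k+1) % 2 = 1 := by omega
    simp only [hqbdef, e, if_pos]
  have hqb_even : ∀ k : ℕ, qb (2*k+2) = qB := fun k => by
    have e : (2*k+2) % 2 = 0 := by omega
    simp [hqbdef, e]
  have hPW1 : PW q 1 n = Qv := by
    have hbp := prod_blocks q A hAmono (2*l)
    rw [Finset.prod_congr rfl hqprod_inner, hA0, hAL] at hbp
    have hsplit : ∏ t ∈ Finset.range (2*l), qb (t+1) ^ al (t+1)
        = ∏ k ∈ Finset.range l, (qA ^ al (2*k+1) * qB ^ al (2*k+2)) := by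
      rw [prod_range_even_odd (fun t => qb (t+1) ^ al (t+1)) l]
      refine Finset.prod_congr rfl (fun k _ => ?_)
      rw [show 2*k+1+1 = 2*k+2 by omega, hqb_odd, hqb_even]
    rw [hsplit] at hbp
    rw [Finset.prod_mul_distrib, Finset.prod_pow_eq_pow_sum, Finset.prod_pow_eq_pow_sum,
      hsum_odd, hsum_even] at hbp
    have hIoc : ∏ j ∈ Finset.Ioc 0 n, q j = PW q 1 n := by
      rw [show Finset.Ioc 0 n = Finset.Icc 1 n from rfl, prod_Icc_one_eq_range q n]
      exact Finset.prod_congr rfl (fun i _ => by rw [Nat.add_comm])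
    rw [hIoc] at hbp
    rw [← hbp, hQvdef]
  have hPWt : ∀ t, PW q t n = Qv := fun t => (PW_window q n hq_per t).trans hPW1
  set eps : ℝ := (-1)^n with hepsdef
  have heps : eps = 1 ∨ eps = -1 := by
    rcases Nat.even_or_odd n with he | ho
    · left; exact he.neg_one_pow
    · right; exact ho.neg_one_pow
  have h1meQ : 1 - eps * Qv ≠ 0 := by rcases heps with hcase|hcase <;> rw [hcase] <;> nlinarith
  have h1peQ : 1 + eps * Qv ≠ 0 := by rcases heps with hcase|hcase <;> rw [hcase] <;> nlinarith
  have hQsq : (1 : ℝ) - Qv^2 ≠ 0 := by nlinarith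
  set BL : ℝ := ∏ i ∈ Finset.range (2*l), bl i with hBLdef
  have hIccBL : ∏ i ∈ Finset.Icc 1 (2*l), bl i = BL := by
    rw [prod_Icc_one_eq_range bl (2*l)]
    have e : ∏ i ∈ Finset.range (2*l), bl (i+1) = Mp bl 1 (2*l) := by
      unfold Mp
      exact Finset.prod_congr rfl (fun i _ => by rw [Nat.add_comm])
    rw [e, Mp_window bl (2*l) hblper 1]
  have hblt : ∀ t, 1 ≤ t → t ≤ 2*l → bl t = (-qb t)^(al t) := by
    intro t h1 h2
    rcases Nat.even_or_odd t with he | ho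
    · obtain ⟨j, hj⟩ := he
      have hj1 : t = 2 * j := by omega
      have hbv := (hbl j (by omega) (by omega)).2
      rw [← hj1] at hbv
      have hqv : qb t = qB := by rw [hj1, show 2*j = 2*(j-1)+2 by omega]; exact hqb_even (j-1)
      rw [hqv, hbv, ← neg_pow]
    · obtain ⟨j, hj⟩ := ho
      have hj1 : t = 2 * (j+1) - 1 := by omega
      have hbv := (hbl (j+1) (by omega) (by omega)).1
      rw [← hj1] at hbv
      have hqv : qb t = qA := by rw [show t = 2*j+1 by omega]; exact hqb_odd j
      rw [hqv, hbv, ← neg_pow]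
  have hBLQ : BL = eps * Qv := by
    have e1 : BL = Mp bl 1 (2*l) := by rw [← hIccBL, prod_Icc_one_eq_range bl (2*l)]; unfold Mp; exact Finset.prod_congr rfl (fun i _ => by rw [Nat.add_comm])
    have e2 : Mp bl 1 (2*l) = ∏ k ∈ Finset.range l, ((-qA) ^ al (2*k+1) * (-qB) ^ al (2*k+2)) := by
      unfold Mp
      rw [prod_range_even_odd (fun i => bl (1+i)) l]
      refine Finset.prod_congr rfl (fun k hk => ?_)
      have hk' : k < l := Finset.mem_range.mp hk
      rw [show 1 + 2*k = 2*k+1 by omega, show 1 + (2*k+1) = 2*k+2 by omega]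
      rw [hblt (2*k+1) (by omega) (by omega), hblt (2*k+2) (by omega) (by omega),
        hqb_odd, hqb_even]
    rw [e1, e2, Finset.prod_mul_distrib, Finset.prod_pow_eq_pow_sum, Finset.prod_pow_eq_pow_sum,
      hsum_odd, hsum_even, neg_pow, neg_pow, hepsdef, hQvdef, hn]
    rw [pow_add]
    ring
  
  set C : ℕ → ℝ := fun M => ∑ j ∈ Finset.Icc 1 n, PW q (j+1) M with hCdef
  set V : ℕ → ℝ := fun j => ∑ m ∈ Finset.range n, (-1:ℝ)^m * PW q (j+1) (m+1) with hVdef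
  have hVper : ∀ j, V (j+n) = V j := by
    intro j
    simp only [hVdef]
    refine Finset.sum_congr rfl (fun m _ => ?_)
    rw [show j+n+1 = (j+1)+n by omega, PW_per q n hq_per]
  have hshift : ∀ f : ℕ → ℝ, (∀ j, f (j+n) = f j) →
      ∑ j ∈ Finset.Icc 1 n, f (j+1) = ∑ j ∈ Finset.Icc 1 n, f j := by
    intro f hf
    rw [sum_Icc_one_eq_range (fun j => f (j+1)) n, sum_Icc_one_eq_range f n]
    have h2 : ∑ i ∈ Finset.range n, f (2+i) = ∑ i ∈ Finset.range n, f i :=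
      sum_window_shift f n hf 2
    have h1 : ∑ i ∈ Finset.range n, f (1+i) = ∑ i ∈ Finset.range n, f i :=
      sum_window_shift f n hf 1
    have e1 : ∑ i ∈ Finset.range n, f (i+1+1) = ∑ i ∈ Finset.range n, f (2+i) :=
      Finset.sum_congr rfl (fun i _ => by rw [show i+1+1 = 2+i by omega])
    have e2 : ∑ i ∈ Finset.range n, f (i+1) = ∑ i ∈ Finset.range n, f (1+i) :=
      Finset.sum_congr rfl (fun i _ => by rw [Nat.add_comm])
    rw [e1, e2, h1, h2]
  have hL1 : ∀ M, ∑ j ∈ Finset.Icc 1 n, p j * PW q (j+1) M = C M - C (M+1) := by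
    intro M
    have hpoint : ∀ j, p j * PW q (j+1) M = PW q (j+1) M - PW q j (M+1) := by
      intro j
      rw [PW_succ_left q j M]
      have : p j = 1 - q j := by simp [hq]
      rw [this]; ring
    rw [Finset.sum_congr rfl (fun j _ => hpoint j), Finset.sum_sub_distrib]
    have : ∑ j ∈ Finset.Icc 1 n, PW q j (M+1) = C (M+1) := by
      rw [hCdef]
      exact (hshift (fun j => PW q j (M+1)) (fun j => PW_per q n hq_per j (M+1))).symm
    rw [this, hCdef]
  have hT : (∑ k ∈ Finset.Icc 1 n, ∑ j ∈ Finset.Icc 1 n, p j * PW q (j+1) (2*k))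
      = ∑ m ∈ Finset.Icc 2 (2*n+1), (-1:ℝ)^m * C m := by
    rw [Finset.sum_congr rfl (fun k _ => hL1 (2*k))]
    exact alt_pair_sum C n
  have hCshift : ∀ m, C (m+n) = Qv * C m := by
    intro m
    simp only [hCdef]
    rw [Finset.mul_sum]
    refine Finset.sum_congr rfl (fun j _ => ?_)
    rw [PW_add q (j+1) m n, hPWt (j+1+m), mul_comm]
  have hsplit2n : ∑ m ∈ Finset.Icc 2 (2*n+1), (-1:ℝ)^m * C m
      = (1 + eps*Qv) * ∑ m ∈ Finset.Icc 2 (n+1), (-1:ℝ)^m * C m := by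
    have e0 : ∀ x : ℕ, Finset.Icc 2 x = Finset.Ioc 1 x := fun x => rfl
    rw [e0, e0]
    have hc := Finset.sum_Ioc_consecutive (fun m => (-1:ℝ)^m * C m)
      (show (1:ℕ) ≤ n+1 by omega) (show n+1 ≤ 2*n+1 by omega)
    rw [← hc]
    have hs : ∑ m ∈ Finset.Ioc (n+1) (2*n+1), (-1:ℝ)^m * C m
        = ∑ m ∈ Finset.Ioc 1 (n+1), (-1:ℝ)^(m+n) * C (m+n) := by
      have := sum_Ioc_shift (fun m => (-1:ℝ)^m * C m) 1 (n+1) n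
      rw [show 1+n = n+1 by omega, show n+1+n = 2*n+1 by omega] at this
      exact this
    rw [hs]
    rw [← Finset.sum_add_distrib, Finset.mul_sum]
    refine Finset.sum_congr rfl (fun m _ => ?_)
    rw [hCshift m, pow_add, ← hepsdef]
    ring
  have hG : ∑ m ∈ Finset.Icc 2 (n+1), (-1:ℝ)^m * C m
      = ∑ j ∈ Finset.Icc 1 n, q j * V j := by
    have e1 : ∑ m ∈ Finset.Icc 2 (n+1), (-1:ℝ)^m * C m
        = ∑ i ∈ Finset.range n, (-1:ℝ)^i * C (i+2) := by
      rw [show Finset.Icc 2 (n+1) = Finset.Ico 2 (n+2) from rfl, Finset.sum_Ico_eq_sum_range]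
      simp only [show n+2-2 = n from by omega]
      refine Finset.sum_congr rfl (fun i _ => ?_)
      rw [show 2+i = i+2 by omega, pow_add]
      norm_num
    rw [e1]
    have swap : ∑ i ∈ Finset.range n, (-1:ℝ)^i * C (i+2)
        = ∑ j ∈ Finset.Icc 1 n, q (j+1) * V (j+1) := by
      simp only [hCdef, Finset.mul_sum]
      rw [Finset.sum_comm]
      refine Finset.sum_congr rfl (fun j _ => ?_)
      have e2 : ∀ i : ℕ, (-1:ℝ)^i * PW q (j+1) (i+2)
          = q (j+1) * ((-1:ℝ)^i * PW q (j+2) (i+1)) := by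
        intro i
        rw [show i+2 = (i+1)+1 by omega, PW_succ_left q (j+1) (i+1)]
        ring
      rw [Finset.sum_congr rfl (fun i _ => e2 i), ← Finset.mul_sum]
    rw [swap]
    exact hshift (fun j => q j * V j)
      (fun j => by show q (j+n) * V (j+n) = q j * V j; rw [hq_per j, hVper j])
  
  set ct : ℝ := 1 - eps * Qv with hctdef
  have hVrec : ∀ j, V j = q (j+1) * (ct - V (j+1)) := by
    intro j
    obtain ⟨n', hn'⟩ : ∃ n', n = n'+1 := ⟨n-1, by omega⟩
    have hepsn' : eps = (-1:ℝ)^(n'+1) := by rw [hepsdef, hn']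
    have hPWn : PW q (j+2) (n'+1) = Qv := by rw [← hn']; exact hPWt (j+2)
    simp only [hVdef]
    have e1 : ∀ m : ℕ, (-1:ℝ)^m * PW q (j+1) (m+1) = q (j+1) * ((-1)^m * PW q (j+2) m) := by
      intro m
      rw [show j+1+1 = j+2 by omega] at *
      rw [PW_succ_left q (j+1) m, show j+1+1 = j+2 by omega]
      ring
    rw [Finset.sum_congr rfl (fun m _ => e1 m), ← Finset.mul_sum]
    congr 1
    have e4 : ∀ (mm : ℕ), (mm < n) → (j+1+1 = j+2) := fun _ _ => by omega
    rw [hn']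
    rw [Finset.sum_range_succ' (fun m => (-1:ℝ)^m * PW q (j+2) m) n',
      Finset.sum_range_succ (fun m => (-1:ℝ)^m * PW q (j+1+1) (m+1)) n']
    rw [show j+1+1 = j+2 by omega, hPWn]
    have e5 : ∀ m, (-1:ℝ)^(m+1) * PW q (j+2) (m+1) = -((-1)^m * PW q (j+2) (m+1)) := by
      intro m; rw [pow_succ]; ring
    rw [Finset.sum_congr rfl (fun m _ => e5 m), Finset.sum_neg_distrib]
    have he' : ((-1:ℝ))^n' = -eps := by rw [hepsn', pow_succ]; ring
    rw [he']
    simp only [PW, Finset.prod_range_zero, pow_zero, mul_one, hctdef]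
    ring
  set kap1 : ℝ := kap g bl (2*l) 1 with hkap1
  set W : ℕ → ℝ := fun j => Wd q ct kap1 n (n - j) with hWdef
  have hWn : W n = kap1 := by simp only [hWdef, Nat.sub_self]; rfl
  have hWrec : ∀ j, j < n → W j = q (j+1) * (ct - W (j+1)) := by
    intro j hj
    simp only [hWdef]
    rw [show n - j = (n - (j+1)) + 1 by omega]
    show Wd q ct kap1 n ((n - (j+1))+1) = _
    rw [Wd, show n - (n - (j+1)) = j+1 by omega]
  have hAmono' : Monotone A := monotone_nat_of_le_succ hAmono
  have hA_pred : ∀ t, 1 ≤ t → A t = A (t-1) + al t := by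
    intro t h1
    conv_lhs => rw [show t = (t-1)+1 by omega]
    rw [hAsucc (t-1), show t-1+1 = t by omega]
  have hkap_rec : ∀ t, kap g bl (2*l) t
      = g t * (1 - bl t) * (1 - BL) + bl t * kap g bl (2*l) (t+1) :=
    fun t => kap_rec g bl (2*l) (by omega) hblper hgL t
  have hkapcyc : kap g bl (2*l) (2*l+1) = kap1 := by
    rw [hkap1]
    have := kap_per g bl (2*l) hblper hgL 1
    rw [show 1 + 2*l = 2*l+1 by omega] at this
    exact this
  have hct' : ct = 1 - BL := by rw [hctdef, hBLQ]
  have hinblock : ∀ t, 1 ≤ t → t ≤ 2*l → ∀ c, c ≤ al t →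
      W (A t - c) = (1-BL) * g t + (-qb t)^c * (W (A t) - (1-BL) * g t) := by
    intro t h1 h2 c
    induction c with
    | zero => intro _; simp
    | succ c ih =>
      intro hc
      have hcW := ih (by omega)
      have hAt_le : A t ≤ n := by rw [← hAL]; exact hAmono' h2
      have halA : al t ≤ A t := by rw [hA_pred t h1]; omega
      have hrec := hWrec (A t - (c+1)) (by omega)
      rw [show (A t - (c+1)) + 1 = A t - c by omega] at hrec
      have hqv : q (A t - c) = qb t := by
        refine hqblock t h1 h2 (A t - c) ?_ (by omega)
        have := hA_pred t h1
        omega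
      rw [hrec, hqv, hcW]
      have hgid : qb t * (1 - g t) = g t := by
        have hne := hqbp1 t
        simp only [hgdef]
        field_simp
        ring
      rw [hct', pow_succ]
      linear_combination (1-BL) * hgid
  have hblockstart : ∀ d, d ≤ 2*l → W (A (2*l - d)) = kap g bl (2*l) (2*l - d + 1) := by
    intro d
    induction d with
    | zero =>
      intro _
      simp only [Nat.sub_zero]
      rw [hAL, hWn, hkapcyc]
    | succ d ih =>
      intro hd
      have h1t : 1 ≤ 2*l - d ∧ 2*l - d ≤ 2*l := by omega
      have e : A (2*l - (d+1)) = A (2*l - d) - al (2*l - d) := by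
        have := hA_pred (2*l - d) h1t.1
        rw [show 2*l - d - 1 = 2*l - (d+1) by omega] at this
        omega
      rw [e, hinblock (2*l - d) h1t.1 h1t.2 (al (2*l - d)) le_rfl]
      have hWAt : W (A (2*l - d)) = kap g bl (2*l) (2*l - d + 1) := ih (by omega)
      rw [hWAt, ← hblt (2*l - d) h1t.1 h1t.2]
      rw [show 2*l - (d+1) + 1 = 2*l - d by omega, hkap_rec (2*l - d)]
      ring
  have hVd : ∀ d, d ≤ n → V (n - d) - W (n - d)
      = (-1:ℝ)^d * PW q (n-d+1) d * (V n - W n) := by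
    intro d
    induction d with
    | zero => intro _; simp [PW]
    | succ d ih =>
      intro hd
      have ihh := ih (by omega)
      have hVr := hVrec (n - (d+1))
      rw [show n-(d+1)+1 = n-d by omega] at hVr
      have hWr := hWrec (n-(d+1)) (by omega)
      rw [show n-(d+1)+1 = n-d by omega] at hWr
      rw [hVr, hWr, show n-(d+1)+1 = n-d by omega, PW_succ_left q (n-d) d, pow_succ]
      linear_combination (-(q (n-d))) * ihh
  have hA00 : W 0 = kap1 := by
    have := hblockstart (2*l) le_rfl
    rw [Nat.sub_self, hA0] at this
    rw [this, hkap1]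
  have hVnWn : V n = W n := by
    have h0 := hVd n le_rfl
    rw [Nat.sub_self] at h0
    simp only [Nat.zero_add] at h0
    rw [hPWt 1, ← hepsdef] at h0
    have hV0 : V n = V 0 := by have := hVper 0; rwa [Nat.zero_add] at this
    have hW0 : W 0 = W n := by rw [hA00, hWn]
    rw [← hV0, hW0] at h0
    have hz : (1 - eps*Qv) * (V n - W n) = 0 := by linear_combination h0
    rcases mul_eq_zero.mp hz with hcase | hcase
    · exact absurd hcase h1meQ
    · linarith [sub_eq_zero.mp hcase]
  have hVW : ∀ j, j ≤ n → V j = W j := by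
    intro j hj
    have hd := hVd (n - j) (by omega)
    rw [show n - (n-j) = j by omega, hVnWn, sub_self, mul_zero] at hd
    linarith [hd]
  
  have hsumqV : ∑ j ∈ Finset.Icc 1 n, q j * V j
      = ∑ t ∈ Finset.range (2*l), ((al (t+1) : ℝ) * (qb (t+1) * ((1-BL) * g (t+1)))
          + g (t+1) * (1 - bl (t+1)) * (kap g bl (2*l) (t+2) - (1-BL) * g (t+1))) := by
    have hVW' : ∀ j ∈ Finset.Icc 1 n, q j * V j = q j * W j := by
      intro j hj
      simp only [Finset.mem_Icc] at hj
      rw [hVW j hj.2]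
    rw [Finset.sum_congr rfl hVW']
    have hpart := sum_blocks (fun j => q j * W j) A hAmono (2*l)
    rw [hA0, hAL] at hpart
    rw [show Finset.Icc 1 n = Finset.Ioc 0 n from rfl, ← hpart]
    refine Finset.sum_congr rfl (fun t ht => ?_)
    have ht' : t < 2*l := Finset.mem_range.mp ht
    have h1 : 1 ≤ t+1 := by omega
    have h2 : t+1 ≤ 2*l := by omega
    have hIoc : Finset.Ioc (A t) (A (t+1)) = Finset.Ioc (A (t+1) - al (t+1)) (A (t+1)) := by
      rw [hAsucc t]
      congr 1
      omega
    rw [hIoc, sum_Ioc_rev (fun j => q j * W j) (A (t+1)) (al (t+1)) (by rw [hAsucc t]; omega)]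
    have hkt : W (A (t+1)) = kap g bl (2*l) (t+2) := by
      have hbs := hblockstart (2*l - (t+1)) (by omega)
      rw [show 2*l - (2*l - (t+1)) = t+1 by omega] at hbs
      rw [hbs]
    have hterm : ∀ c ∈ Finset.range (al (t+1)), q (A (t+1) - c) * W (A (t+1) - c)
        = qb (t+1) * ((1-BL) * g (t+1))
          + ((-qb (t+1))^c * qb (t+1)) * (kap g bl (2*l) (t+2) - (1-BL)*g (t+1)) := by
      intro c hc
      have hc' : c < al (t+1) := Finset.mem_range.mp hc
      have hqv : q (A (t+1) - c) = qb (t+1) := by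
        refine hqblock (t+1) h1 h2 _ ?_ (by omega)
        have := hA_pred (t+1) h1
        simp only [Nat.add_sub_cancel] at this ⊢
        omega
      have hWv := hinblock (t+1) h1 h2 c (by omega)
      rw [hqv, hWv, hkt]
      ring
    rw [Finset.sum_congr rfl hterm, Finset.sum_add_distrib]
    congr 1
    · rw [Finset.sum_const, Finset.card_range, nsmul_eq_mul]
    · rw [← Finset.sum_mul, ← Finset.sum_mul]
      congr 1
      have hx : (-qb (t+1)) ≠ 1 := by have := hqb0 (t+1); linarith
      rw [geom_sum_eq hx (al (t+1)), ← hblt (t+1) h1 h2]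
      have hne := hqbp1 (t+1)
      have hne2 : (-qb (t+1)) - 1 ≠ 0 := by have := hqb0 (t+1); intro hcon; linarith
      simp only [hgdef]
      field_simp
      ring
  
  have hg_odd : ∀ k : ℕ, g (2*k+1) = qA/(1+qA) := fun k => by
    simp only [hgdef]; rw [hqb_odd]
  have hg_even : ∀ k : ℕ, g (2*k+2) = qB/(1+qB) := fun k => by
    simp only [hgdef]; rw [hqb_even]
  have hFside : ∑ t ∈ Finset.range (2*l), (al (t+1) : ℝ) * (qb (t+1) * ((1-BL) * g (t+1)))
      = (1-BL) * ((r:ℝ) * (qA * (qA/(1+qA))) + (s:ℝ) * (qB * (qB/(1+qB)))) := by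
    rw [sum_range_even_odd (fun t => (al (t+1) : ℝ) * (qb (t+1) * ((1-BL) * g (t+1)))) l]
    have e : ∀ k ∈ Finset.range l,
        (al (2*k+1) : ℝ) * (qb (2*k+1) * ((1-BL) * g (2*k+1)))
          + (al (2*k+1+1) : ℝ) * (qb (2*k+1+1) * ((1-BL) * g (2*k+1+1)))
        = (al (2*k+1) : ℝ) * (qA * ((1-BL) * (qA/(1+qA))))
          + (al (2*k+2) : ℝ) * (qB * ((1-BL) * (qB/(1+qB)))) := by
      intro k _
      rw [show 2*k+1+1 = 2*k+2 by omega, hqb_odd, hqb_even, hg_odd, hg_even]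
    rw [Finset.sum_congr rfl e, Finset.sum_add_distrib, ← Finset.sum_mul, ← Finset.sum_mul,
      ← Nat.cast_sum, ← Nat.cast_sum, hsum_odd, hsum_even]
    ring
  have hkdiff : ∀ t : ℕ, kap g bl (2*l) (t+2) - (1-BL) * g (t+1)
      = (g (t+2) - g (t+1)) * Efun bl l (t+1) := by
    intro t
    have := kap_sub g bl l hblper hg2 (t+1)
    rw [show t+1+1 = t+2 by omega, ← hBLdef] at this
    rw [← this]
    ring
  have hX1 := X_eq bl l hblper 1
  have hX0 := X_eq bl l hblper 2
  have hcore : ∑ t ∈ Finset.range (2*l),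
        g (t+1) * (1 - bl (t+1)) * (kap g bl (2*l) (t+2) - (1-BL) * g (t+1))
      = -(qA/(1+qA) - qB/(1+qB))^2
          * ((l:ℝ) + (∑ m ∈ Finset.Icc 1 (2*l), ∑ u ∈ Finset.range l,
                (Mp bl m (2*u+2) - Mp bl m (2*u+1))) - (l:ℝ) * BL) := by
    rw [Finset.sum_congr rfl (fun t _ => by rw [hkdiff t])]
    rw [sum_range_even_odd
      (fun t => g (t+1) * (1 - bl (t+1)) * ((g (t+2) - g (t+1)) * Efun bl l (t+1))) l]
    have e : ∀ k ∈ Finset.range l,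
        g (2*k+1) * (1 - bl (2*k+1)) * ((g (2*k+2) - g (2*k+1)) * Efun bl l (2*k+1))
          + g (2*k+1+1) * (1 - bl (2*k+1+1)) * ((g (2*k+1+2) - g (2*k+1+1)) * Efun bl l (2*k+1+1))
        = (qA/(1+qA)) * ((qB/(1+qB)) - (qA/(1+qA))) * ((1 - bl (2*k+1)) * Efun bl l (2*k+1))
          + (qB/(1+qB)) * ((qA/(1+qA)) - (qB/(1+qB))) * ((1 - bl (2*k+2)) * Efun bl l (2*k+2)) := by
      intro k _
      have e3 : g (2*k+1+2) = qA/(1+qA) := by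
        rw [show 2*k+1+2 = 2*(k+1)+1 by omega, hg_odd]
      rw [show 2*k+1+1 = 2*k+2 by omega, hg_odd, hg_even, e3]
      ring
    rw [Finset.sum_congr rfl e, Finset.sum_add_distrib, ← Finset.mul_sum, ← Finset.mul_sum]
    rw [hX1, hX0]
    ring
  
  have hDSconv : ∑ m ∈ Finset.Icc 1 (2*l), ∑ j ∈ Finset.Icc 1 (2*l-1),
        (-1:ℝ)^j * ∏ i ∈ Finset.Icc m (m+j-1), bl i
      = (∑ m ∈ Finset.Icc 1 (2*l), ∑ u ∈ Finset.range l, (Mp bl m (2*u+2) - Mp bl m (2*u+1)))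
        - 2*(l:ℝ)*BL := by
    have e : ∀ m ∈ Finset.Icc 1 (2*l), ∑ j ∈ Finset.Icc 1 (2*l-1),
          (-1:ℝ)^j * ∏ i ∈ Finset.Icc m (m+j-1), bl i
        = (∑ u ∈ Finset.range l, (Mp bl m (2*u+2) - Mp bl m (2*u+1))) - BL := by
      intro m _
      rw [DS_inner bl l m hl1, Mp_window bl (2*l) hblper m, ← hBLdef]
    rw [Finset.sum_congr rfl e, Finset.sum_sub_distrib, Finset.sum_const, Nat.card_Icc]
    rw [show 2*l+1-1 = 2*l by omega, nsmul_eq_mul]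
    push_cast
    ring
  have hTT : (∑ k ∈ Finset.Icc 1 n, ∑ j ∈ Finset.Icc 1 n, p j * PW q (j+1) (2*k))
      = (1+eps*Qv) * ∑ j ∈ Finset.Icc 1 n, q j * V j := by
    rw [hT, hsplit2n, hG]
  have hprodPW : ∀ (j k : ℕ), ∏ i ∈ Finset.Icc (j+1) (j+2*k), (1 - p i) = PW q (j+1) (2*k) := by
    intro j k
    rw [show Finset.Icc (j+1) (j+2*k) = Finset.Ico (j+1) (j+2*k+1) from rfl,
      Finset.prod_Ico_eq_prod_range]
    rw [show j+2*k+1-(j+1) = 2*k by omega]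
    simp only [PW, hq]
  have hpC : pCircD p r s (1-pA) (1-pB)
      = (1/(n:ℝ)) * (((1+eps*Qv) * ∑ j ∈ Finset.Icc 1 n, q j * V j) / (1 - Qv^2)) := by
    unfold pCircD
    rw [← hqA, ← hqB, ← hn]
    have e : ∀ k ∈ Finset.Icc 1 n,
        (∑ j ∈ Finset.Icc 1 n, p j * ∏ i ∈ Finset.Icc (j+1) (j+2*k), (1 - p i))
            / (1 - (qA^r*qB^s)^2)
          = (∑ j ∈ Finset.Icc 1 n, p j * PW q (j+1) (2*k)) / (1 - Qv^2) := by
      intro k _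
      rw [Finset.sum_congr rfl (fun j _ => by rw [hprodPW j k]), hQvdef]
    rw [Finset.sum_congr rfl e, ← Finset.sum_div, hTT]
  have h1qA : (1:ℝ) + qA ≠ 0 := by linarith
  have h1qB : (1:ℝ) + qB ≠ 0 := by linarith
  have hpoA : poArm pA = qA * (qA/(1+qA)) := by
    unfold poArm
    rw [← hqA]
    have h1 : pA = 1 - qA := by rw [hqA]; ring
    have h2 : (1:ℝ) - qA^2 ≠ 0 := by nlinarith
    rw [h1]
    field_simp
    ring
  have hpoB : poArm pB = qB * (qB/(1+qB)) := by
    unfold poArm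
    rw [← hqB]
    have h1 : pB = 1 - qB := by rw [hqB]; ring
    have h2 : (1:ℝ) - qB^2 ≠ 0 := by nlinarith
    rw [h1]
    field_simp
    ring
  have hqVfinal : ∑ j ∈ Finset.Icc 1 n, q j * V j
      = (1-BL) * ((r:ℝ) * (qA*(qA/(1+qA))) + (s:ℝ) * (qB*(qB/(1+qB))))
        + -(qA/(1+qA) - qB/(1+qB))^2
            * ((l:ℝ) + (∑ m ∈ Finset.Icc 1 (2*l), ∑ u ∈ Finset.range l,
                  (Mp bl m (2*u+2) - Mp bl m (2*u+1))) - (l:ℝ) * BL) := by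
    rw [hsumqV, Finset.sum_add_distrib, hFside, hcore]
  have hnne : (n:ℝ) ≠ 0 := Nat.cast_ne_zero.mpr (by omega)
  unfold RD Sval
  rw [← hn, hpoA, hpoB, hpC, hIccBL, hDSconv, hqVfinal, hBLQ]
  rw [show ((-1:ℝ)^(r+s) : ℝ) = eps by rw [hepsdef, hn]]
  simp only [← hQvdef]
  rcases heps with he | he <;> rw [he] <;> field_simp <;> ring
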